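/- Consider the path on three vertices 1–2–3 with i.i.d. uniform(0,1) initial levels η(1), η(2), η(3), and let κ = max{η(1), (η(1)+η(2))/2, (η(1)+η(2)+η(3))/3}. Then for x ∈ [0, 1/3], P(κ ≤ x) = (8/3)x³. -/

import Mathlib

open MeasureTheory ProbabilityTheory Set

lemma lemA {t : ℝ} (h1 : t ≤ 1) :
    (volume.restrict (Icc (0:ℝ) 1)) (Iic t) = ENNReal.ofReal t := by
  rw [Measure.restrict_apply measurableSet_Iic]
  rcases le_or_gt 0 t with h0 | h0
  · have : Iic t ∩ Icc (0:ℝ) 1 = Icc 0 t := by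
      ext y; simp only [mem_inter_iff, mem_Iic, mem_Icc]
      constructor
      · rintro ⟨h, h', _⟩; exact ⟨h', h⟩
      · rintro ⟨h, h'⟩; exact ⟨h', h, h'.trans h1⟩
    rw [this, Real.volume_Icc, sub_zero]
  · have : Iic t ∩ Icc (0:ℝ) 1 = ∅ := by
      ext y; simp only [mem_inter_iff, mem_Iic, mem_Icc, mem_empty_iff_false, iff_false]
      rintro ⟨h, h', _⟩; linarith
    rw [this, measure_empty, ENNReal.ofReal_of_nonpos h0.le]

lemma lemB {x a : ℝ} (hx0 : 0 ≤ x) (hx3 : x ≤ 1/3) (ha0 : 0 ≤ a) (ha1 : a ≤ 1) :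
    ((volume.restrict (Icc (0:ℝ) 1)).prod (volume.restrict (Icc (0:ℝ) 1)))
      {q : ℝ × ℝ | a ≤ x ∧ a + q.1 ≤ 2*x ∧ a + q.1 + q.2 ≤ 3*x}
    = ENNReal.ofReal ((Iic x).indicator
        (fun a => (3*x-a)*(2*x-a) - (2*x-a)^2/2) a) := by
  set μ := volume.restrict (Icc (0:ℝ) 1) with hμ
  by_cases hax : a ≤ x
  · have hset : {q : ℝ × ℝ | a ≤ x ∧ a + q.1 ≤ 2*x ∧ a + q.1 + q.2 ≤ 3*x}
        = {q : ℝ × ℝ | a + q.1 ≤ 2*x ∧ a + q.1 + q.2 ≤ 3*x} := by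
      ext q; simp [hax]
    have hS : MeasurableSet {q : ℝ × ℝ | a + q.1 ≤ 2*x ∧ a + q.1 + q.2 ≤ 3*x} := by
      exact (measurableSet_le (measurable_const.add measurable_fst) measurable_const).inter
        (measurableSet_le ((measurable_const.add measurable_fst).add measurable_snd)
          measurable_const)
    rw [hset, Measure.prod_apply hS]
    have hcong : ∫⁻ b, μ (Prod.mk b ⁻¹' {q : ℝ × ℝ | a + q.1 ≤ 2*x ∧ a + q.1 + q.2 ≤ 3*x}) ∂μ
        = ∫⁻ b in Icc (0:ℝ) 1,
            ENNReal.ofReal ((Iic (2*x-a)).indicator (fun b => 3*x-a-b) b) := by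
      rw [hμ]
      refine setLIntegral_congr_fun measurableSet_Icc ?_
      intro b hb
      beta_reduce
      rcases hb with ⟨hb0, hb1⟩
      by_cases hab : a + b ≤ 2*x
      · have hslice : Prod.mk b ⁻¹' {q : ℝ × ℝ | a + q.1 ≤ 2*x ∧ a + q.1 + q.2 ≤ 3*x}
            = Iic (3*x - a - b) := by
          ext c; simp only [mem_preimage, mem_setOf_eq, mem_Iic]
          constructor
          · rintro ⟨_, h⟩; linarith
          · intro h; exact ⟨hab, by linarith⟩
        rw [hslice, ← hμ, lemA (by linarith),
          indicator_of_mem (by simp [mem_Iic]; linarith)]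
      · have hslice : Prod.mk b ⁻¹' {q : ℝ × ℝ | a + q.1 ≤ 2*x ∧ a + q.1 + q.2 ≤ 3*x}
            = (∅ : Set ℝ) := by
          ext c; simp only [mem_preimage, mem_setOf_eq, mem_empty_iff_false, iff_false]
          rintro ⟨h, _⟩; exact hab h
        rw [hslice, measure_empty, indicator_of_notMem (by simp [mem_Iic]; linarith),
          ENNReal.ofReal_zero]
    rw [hcong]
    have hint : IntegrableOn ((Iic (2*x-a)).indicator (fun b => 3*x-a-b)) (Icc (0:ℝ) 1) := by
      exact ((continuous_const.sub continuous_id).integrableOn_Icc).indicator measurableSet_Iic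
    rw [← ofReal_integral_eq_lintegral_ofReal hint]
    · congr 1
      rw [setIntegral_indicator measurableSet_Iic]
      have hIcc : Icc (0:ℝ) 1 ∩ Iic (2*x-a) = Icc 0 (2*x-a) := by
        ext y; simp only [mem_inter_iff, mem_Icc, mem_Iic]
        constructor
        · rintro ⟨⟨h1, h2⟩, h3⟩; exact ⟨h1, h3⟩
        · rintro ⟨h1, h2⟩; exact ⟨⟨h1, by linarith⟩, h2⟩
      rw [hIcc, integral_Icc_eq_integral_Ioc,
        ← intervalIntegral.integral_of_le (by linarith : (0:ℝ) ≤ 2*x-a)]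
      have : ∀ b : ℝ, 3*x-a-b = (3*x-a) - b := fun b => by ring
      rw [indicator_of_mem (mem_Iic.mpr hax)]
      rw [intervalIntegral.integral_sub intervalIntegrable_const
        intervalIntegral.intervalIntegrable_id,
        intervalIntegral.integral_const, integral_id]
      simp only [smul_eq_mul, sub_zero]
      ring
    · refine Filter.Eventually.of_forall ?_
      intro b
      apply indicator_nonneg
      intro y hy
      simp only [mem_Iic] at hy
      linarith
  · have hset : {q : ℝ × ℝ | a ≤ x ∧ a + q.1 ≤ 2*x ∧ a + q.1 + q.2 ≤ 3*x} = ∅ := by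
      ext q; simp [hax]
    rw [hset, measure_empty, indicator_of_notMem (by simpa [mem_Iic] using hax),
      ENNReal.ofReal_zero]

lemma lemC {x : ℝ} (hx0 : 0 ≤ x) (hx3 : x ≤ 1/3) :
    ((volume.restrict (Icc (0:ℝ) 1)).prod
      ((volume.restrict (Icc (0:ℝ) 1)).prod (volume.restrict (Icc (0:ℝ) 1))))
      {p : ℝ × ℝ × ℝ | p.1 ≤ x ∧ p.1 + p.2.1 ≤ 2*x ∧ p.1 + p.2.1 + p.2.2 ≤ 3*x}
    = ENNReal.ofReal (8/3 * x^3) := by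
  set μ := volume.restrict (Icc (0:ℝ) 1) with hμ
  have hS : MeasurableSet
      {p : ℝ × ℝ × ℝ | p.1 ≤ x ∧ p.1 + p.2.1 ≤ 2*x ∧ p.1 + p.2.1 + p.2.2 ≤ 3*x} := by
    refine ((measurableSet_le measurable_fst measurable_const).inter
      ((measurableSet_le (measurable_fst.add (measurable_fst.comp measurable_snd))
        measurable_const).inter
      (measurableSet_le ((measurable_fst.add (measurable_fst.comp measurable_snd)).add
        (measurable_snd.comp measurable_snd)) measurable_const)))
  rw [Measure.prod_apply hS]
  have hcong : ∫⁻ a, (μ.prod μ) (Prod.mk a ⁻¹'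
      {p : ℝ × ℝ × ℝ | p.1 ≤ x ∧ p.1 + p.2.1 ≤ 2*x ∧ p.1 + p.2.1 + p.2.2 ≤ 3*x}) ∂μ
      = ∫⁻ a in Icc (0:ℝ) 1, ENNReal.ofReal
          ((Iic x).indicator (fun a => (3*x-a)*(2*x-a) - (2*x-a)^2/2) a) := by
    rw [hμ]
    refine setLIntegral_congr_fun measurableSet_Icc ?_
    intro a ha
    beta_reduce
    have : Prod.mk a ⁻¹'
        {p : ℝ × ℝ × ℝ | p.1 ≤ x ∧ p.1 + p.2.1 ≤ 2*x ∧ p.1 + p.2.1 + p.2.2 ≤ 3*x}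
        = {q : ℝ × ℝ | a ≤ x ∧ a + q.1 ≤ 2*x ∧ a + q.1 + q.2 ≤ 3*x} := rfl
    rw [this, ← hμ, lemB hx0 hx3 ha.1 ha.2]
  rw [hcong]
  have hint : IntegrableOn ((Iic x).indicator
      (fun a => (3*x-a)*(2*x-a) - (2*x-a)^2/2)) (Icc (0:ℝ) 1) := by
    exact (Continuous.integrableOn_Icc (by continuity)).indicator measurableSet_Iic
  rw [← ofReal_integral_eq_lintegral_ofReal hint]
  · congr 1
    rw [setIntegral_indicator measurableSet_Iic]
    have hIcc : Icc (0:ℝ) 1 ∩ Iic x = Icc 0 x := by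
      ext y; simp only [mem_inter_iff, mem_Icc, mem_Iic]
      constructor
      · rintro ⟨⟨h1, _⟩, h3⟩; exact ⟨h1, h3⟩
      · rintro ⟨h1, h2⟩; exact ⟨⟨h1, by linarith⟩, h2⟩
    rw [hIcc, integral_Icc_eq_integral_Ioc, ← intervalIntegral.integral_of_le hx0]
    have hfun : (fun a : ℝ => (3*x-a)*(2*x-a) - (2*x-a)^2/2)
        = fun a : ℝ => (4*x^2 - 3*x*a) + a^2/2 := funext fun a => by ring
    rw [hfun]
    have h1 : IntervalIntegrable (fun a : ℝ => 4*x^2 - 3*x*a) volume 0 x :=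
      Continuous.intervalIntegrable (by continuity) _ _
    have h2 : IntervalIntegrable (fun a : ℝ => a^2/2) volume 0 x :=
      Continuous.intervalIntegrable (by continuity) _ _
    have h3 : IntervalIntegrable (fun a : ℝ => 3*x*a) volume 0 x :=
      Continuous.intervalIntegrable (by continuity) _ _
    rw [intervalIntegral.integral_add h1 h2,
      intervalIntegral.integral_sub intervalIntegrable_const h3,
      intervalIntegral.integral_const, intervalIntegral.integral_const_mul,
      integral_id, intervalIntegral.integral_div, integral_pow]
    simp only [smul_eq_mul, sub_zero]
    norm_num
    ring
  · refine Filter.Eventually.of_forall ?_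
    intro a
    apply indicator_nonneg
    intro y hy
    simp only [mem_Iic] at hy
    nlinarith

theorem cdf_three_path_endpoint
    {Ω : Type*} [MeasurableSpace Ω] (P : Measure Ω) [IsProbabilityMeasure P]
    (η : Fin 3 → Ω → ℝ) (hmeas : ∀ i, Measurable (η i))
    (hindep : iIndepFun η P)
    (hunif : ∀ i, Measure.map (η i) P = volume.restrict (Icc (0:ℝ) 1)) :
    ∀ x ∈ Icc (0:ℝ) (1/3),
      P {ω | max (η 0 ω) (max ((η 0 ω + η 1 ω) / 2) ((η 0 ω + η 1 ω + η 2 ω) / 3)) ≤ x}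
        = ENNReal.ofReal (8/3 * x^3) := by
  intro x hx
  obtain ⟨hx0, hx3⟩ := hx
  set μ := volume.restrict (Icc (0:ℝ) 1) with hμ
  set S : Set (ℝ × ℝ × ℝ) :=
    {p : ℝ × ℝ × ℝ | p.1 ≤ x ∧ p.1 + p.2.1 ≤ 2*x ∧ p.1 + p.2.1 + p.2.2 ≤ 3*x} with hSdef
  have hS : MeasurableSet S := by
    refine ((measurableSet_le measurable_fst measurable_const).inter
      ((measurableSet_le (measurable_fst.add (measurable_fst.comp measurable_snd))
        measurable_const).inter
      (measurableSet_le ((measurable_fst.add (measurable_fst.comp measurable_snd)).add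
        (measurable_snd.comp measurable_snd)) measurable_const)))
  have hm12 : Measurable (fun ω => (η 1 ω, η 2 ω)) := (hmeas 1).prodMk (hmeas 2)
  have h12 : IndepFun (η 1) (η 2) P := hindep.indepFun (by decide)
  have hmap12 : P.map (fun ω => (η 1 ω, η 2 ω)) = μ.prod μ := by
    rw [(indepFun_iff_map_prod_eq_prod_map_map (hmeas 1).aemeasurable
      (hmeas 2).aemeasurable).mp h12, hunif 1, hunif 2]
  have h0 : IndepFun (η 0) (fun ω => (η 1 ω, η 2 ω)) P :=
    (hindep.indepFun_prodMk hmeas 1 2 0 (by decide) (by decide)).symm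
  have hmapT : P.map (fun ω => (η 0 ω, (η 1 ω, η 2 ω))) = μ.prod (μ.prod μ) := by
    rw [(indepFun_iff_map_prod_eq_prod_map_map (hmeas 0).aemeasurable
      hm12.aemeasurable).mp h0, hunif 0, hmap12]
  have hev : {ω | max (η 0 ω) (max ((η 0 ω + η 1 ω) / 2) ((η 0 ω + η 1 ω + η 2 ω) / 3)) ≤ x}
      = (fun ω => (η 0 ω, (η 1 ω, η 2 ω))) ⁻¹' S := by
    ext ω
    simp only [hSdef, mem_setOf_eq, mem_preimage, max_le_iff]
    constructor
    · rintro ⟨h1, h2, h3⟩; exact ⟨h1, by linarith, by linarith⟩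
    · rintro ⟨h1, h2, h3⟩; exact ⟨h1, by linarith, by linarith⟩
  rw [hev, ← Measure.map_apply ((hmeas 0).prodMk hm12) hS, hmapT]
  exact lemC hx0 hx3
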